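/- Let x(S,T,a) = -3a - 6a(e^{-aS} + e^{-aT} - 3e^{-a(S+T)} + e^{-2a(S+T)})/((1-e^{-aS})(1-e^{-aT})(1-e^{-a(S+T)})) for a, S, T > 0. Then (1/3)·∂_S∂_T x(S,T,a) evaluated at T = S equals 2a³e^{-2aS}(1+e^{-2aS})/(1-e^{-2aS})³. -/

import Mathlib

open Real

set_option maxHeartbeats 1600000

/-- Inner-derivative scaling function: value of `∂_T x(U,T,a)|_{T=S}` written in
terms of `u = e^{-aU}`, `s = e^{-aS}`. -/
noncomputable def Gaux (a u s : ℝ) : ℝ :=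
  6 * a ^ 2 * s * ((1 - 3 * u + 2 * u ^ 2 * s) * ((1 - u) * (1 - s) * (1 - u * s))
    - (u + s - 3 * (u * s) + (u * s) ^ 2) * ((1 - u) * (2 * (u * s) - u - 1)))
    / ((1 - u) * (1 - s) * (1 - u * s)) ^ 2

lemma inner_deriv_eq (a S U : ℝ) (ha : 0 < a) (hS : 0 < S) (hU : 0 < U) :
    deriv (fun T : ℝ => -3 * a -
      6 * a * (Real.exp (-a * U) + Real.exp (-a * T) - 3 * Real.exp (-a * (U + T))
        + Real.exp (-2 * a * (U + T))) /
      ((1 - Real.exp (-a * U)) * (1 - Real.exp (-a * T)) * (1 - Real.exp (-a * (U + T))))) S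
    = Gaux a (Real.exp (-a * U)) (Real.exp (-a * S)) := by
  have hu0 : 0 < Real.exp (-a * U) := Real.exp_pos _
  have hs0 : 0 < Real.exp (-a * S) := Real.exp_pos _
  have hu1 : Real.exp (-a * U) < 1 := by rw [Real.exp_lt_one_iff]; nlinarith
  have hs1 : Real.exp (-a * S) < 1 := by rw [Real.exp_lt_one_iff]; nlinarith
  have h1u : (0:ℝ) < 1 - Real.exp (-a * U) := by linarith
  have h1s : (0:ℝ) < 1 - Real.exp (-a * S) := by linarith
  have h1us : (0:ℝ) < 1 - Real.exp (-a * U) * Real.exp (-a * S) := by nlinarith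
  have hfeq : (fun T : ℝ => -3 * a -
      6 * a * (Real.exp (-a * U) + Real.exp (-a * T) - 3 * Real.exp (-a * (U + T))
        + Real.exp (-2 * a * (U + T))) /
      ((1 - Real.exp (-a * U)) * (1 - Real.exp (-a * T)) * (1 - Real.exp (-a * (U + T)))))
      = (fun T : ℝ => -3 * a -
      6 * a * (Real.exp (-a * U) + Real.exp (-a * T) - 3 * (Real.exp (-a * U) * Real.exp (-a * T))
        + (Real.exp (-a * U) * Real.exp (-a * T)) ^ 2) /
      ((1 - Real.exp (-a * U)) * (1 - Real.exp (-a * T))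
        * (1 - Real.exp (-a * U) * Real.exp (-a * T)))) := by
    funext T
    rw [show -a * (U + T) = -a * U + -a * T by ring, Real.exp_add,
      show -2 * a * (U + T) = (-a * U + -a * T) + (-a * U + -a * T) by ring,
      Real.exp_add, Real.exp_add]
    ring
  rw [hfeq]
  have hA : HasDerivAt (fun T : ℝ => -a * T) (-a * 1) S := (hasDerivAt_id S).const_mul (-a)
  have hE := hA.exp
  have hue := hE.const_mul (Real.exp (-a * U))
  have hN := ((hE.const_add (Real.exp (-a * U))).sub (hue.const_mul 3)).add (hue.pow 2)
  have hN6 := hN.const_mul (6 * a)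
  have hD := ((hE.const_sub 1).const_mul (1 - Real.exp (-a * U))).mul (hue.const_sub 1)
  have hD0 : (1 - Real.exp (-a * U)) * (1 - Real.exp (-a * S))
      * (1 - Real.exp (-a * U) * Real.exp (-a * S)) ≠ 0 := by positivity
  have hfull := (hN6.div hD hD0).const_sub (-3 * a)
  have hd : deriv (fun T : ℝ => -3 * a -
      6 * a * (Real.exp (-a * U) + Real.exp (-a * T) - 3 * (Real.exp (-a * U) * Real.exp (-a * T))
        + (Real.exp (-a * U) * Real.exp (-a * T)) ^ 2) /
      ((1 - Real.exp (-a * U)) * (1 - Real.exp (-a * T))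
        * (1 - Real.exp (-a * U) * Real.exp (-a * T)))) S = _ := hfull.deriv
  rw [hd, Gaux]
  simp only [Pi.add_apply, Pi.sub_apply, Pi.mul_apply, Pi.pow_apply]
  have h1u' : (1:ℝ) - Real.exp (-a * U) ≠ 0 := ne_of_gt h1u
  have h1s' : (1:ℝ) - Real.exp (-a * S) ≠ 0 := ne_of_gt h1s
  have h1us' : (1:ℝ) - Real.exp (-a * U) * Real.exp (-a * S) ≠ 0 := ne_of_gt h1us
  field_simp
  ring

theorem stmt_3 (a S : ℝ) (ha : 0 < a) (hS : 0 < S)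
    (x : ℝ → ℝ → ℝ)
    (hx : ∀ U T : ℝ, x U T = -3 * a -
      6 * a * (Real.exp (-a * U) + Real.exp (-a * T) - 3 * Real.exp (-a * (U + T))
        + Real.exp (-2 * a * (U + T))) /
      ((1 - Real.exp (-a * U)) * (1 - Real.exp (-a * T)) * (1 - Real.exp (-a * (U + T))))) :
    (1 / 3) * deriv (fun U : ℝ => deriv (fun T : ℝ => x U T) S) S =
      2 * a ^ 3 * Real.exp (-2 * a * S) * (1 + Real.exp (-2 * a * S)) /
        (1 - Real.exp (-2 * a * S)) ^ 3 := by
  have hs0 : 0 < Real.exp (-a * S) := Real.exp_pos _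
  have hs1 : Real.exp (-a * S) < 1 := by rw [Real.exp_lt_one_iff]; nlinarith
  have h1s : (0:ℝ) < 1 - Real.exp (-a * S) := by linarith
  have h1ss : (0:ℝ) < 1 - Real.exp (-a * S) * Real.exp (-a * S) := by nlinarith
  have hev : (fun U : ℝ => deriv (fun T : ℝ => x U T) S)
      =ᶠ[nhds S] fun U : ℝ => Gaux a (Real.exp (-a * U)) (Real.exp (-a * S)) := by
    filter_upwards [Ioi_mem_nhds hS] with U hU
    have hxe : (fun T : ℝ => x U T) = (fun T : ℝ => -3 * a -
      6 * a * (Real.exp (-a * U) + Real.exp (-a * T) - 3 * Real.exp (-a * (U + T))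
        + Real.exp (-2 * a * (U + T))) /
      ((1 - Real.exp (-a * U)) * (1 - Real.exp (-a * T)) * (1 - Real.exp (-a * (U + T))))) := by
      funext T; exact hx U T
    rw [hxe]
    exact inner_deriv_eq a S U ha hS hU
  rw [hev.deriv_eq]
  have hfun : (fun U : ℝ => Gaux a (Real.exp (-a * U)) (Real.exp (-a * S))) = (fun U : ℝ =>
      6 * a ^ 2 * Real.exp (-a * S) *
        ((1 - 3 * Real.exp (-a * U) + 2 * Real.exp (-a * U) ^ 2 * Real.exp (-a * S)) *
          ((1 - Real.exp (-a * U)) * (1 - Real.exp (-a * S))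
            * (1 - Real.exp (-a * U) * Real.exp (-a * S)))
        - (Real.exp (-a * U) + Real.exp (-a * S) - 3 * (Real.exp (-a * U) * Real.exp (-a * S))
            + (Real.exp (-a * U) * Real.exp (-a * S)) ^ 2) *
          ((1 - Real.exp (-a * U)) * (2 * (Real.exp (-a * U) * Real.exp (-a * S))
            - Real.exp (-a * U) - 1))) /
      ((1 - Real.exp (-a * U)) * (1 - Real.exp (-a * S))
        * (1 - Real.exp (-a * U) * Real.exp (-a * S))) ^ 2) := by
    funext U; rw [Gaux]
  rw [hfun]
  have hA : HasDerivAt (fun U : ℝ => -a * U) (-a * 1) S := (hasDerivAt_id S).const_mul (-a)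
  have hE := hA.exp
  have hws := hE.mul_const (Real.exp (-a * S))
  have h1 := ((hE.const_mul 3).const_sub 1).add (((hE.pow 2).const_mul 2).mul_const
    (Real.exp (-a * S)))
  have hQ := ((hE.const_sub 1).mul_const (1 - Real.exp (-a * S))).mul (hws.const_sub 1)
  have hB := ((hE.add_const (Real.exp (-a * S))).sub (hws.const_mul 3)).add (hws.pow 2)
  have hC := (hE.const_sub 1).mul (((hws.const_mul 2).sub hE).sub_const 1)
  have hP := ((h1.mul hQ).sub (hB.mul hC)).const_mul (6 * a ^ 2 * Real.exp (-a * S))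
  have hQ2 := hQ.pow 2
  have hden : ((1 - Real.exp (-a * S)) * (1 - Real.exp (-a * S))
      * (1 - Real.exp (-a * S) * Real.exp (-a * S))) ^ 2 ≠ 0 := by positivity
  have hG := hP.div hQ2 hden
  have hd : deriv (fun U : ℝ =>
      6 * a ^ 2 * Real.exp (-a * S) *
        ((1 - 3 * Real.exp (-a * U) + 2 * Real.exp (-a * U) ^ 2 * Real.exp (-a * S)) *
          ((1 - Real.exp (-a * U)) * (1 - Real.exp (-a * S))
            * (1 - Real.exp (-a * U) * Real.exp (-a * S)))
        - (Real.exp (-a * U) + Real.exp (-a * S) - 3 * (Real.exp (-a * U) * Real.exp (-a * S))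
            + (Real.exp (-a * U) * Real.exp (-a * S)) ^ 2) *
          ((1 - Real.exp (-a * U)) * (2 * (Real.exp (-a * U) * Real.exp (-a * S))
            - Real.exp (-a * U) - 1))) /
      ((1 - Real.exp (-a * U)) * (1 - Real.exp (-a * S))
        * (1 - Real.exp (-a * U) * Real.exp (-a * S))) ^ 2) S = _ := hG.deriv
  rw [hd]
  have hexp2 : Real.exp (-2 * a * S) = Real.exp (-a * S) * Real.exp (-a * S) := by
    rw [← Real.exp_add]; ring_nf
  rw [hexp2]
  have hQne : (1 - Real.exp (-a * S)) * (1 - Real.exp (-a * S))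
      * (1 - Real.exp (-a * S) * Real.exp (-a * S)) ≠ 0 :=
    ne_of_gt (mul_pos (mul_pos h1s h1s) h1ss)
  have hB : (3:ℝ) * (((1 - Real.exp (-a * S)) * (1 - Real.exp (-a * S))
      * (1 - Real.exp (-a * S) * Real.exp (-a * S))) ^ 2) ^ 2 ≠ 0 :=
    mul_ne_zero three_ne_zero (pow_ne_zero _ (pow_ne_zero _ hQne))
  have hW : (1 - Real.exp (-a * S) * Real.exp (-a * S)) ^ 3 ≠ 0 :=
    pow_ne_zero _ (ne_of_gt h1ss)
  simp only [Pi.add_apply, Pi.sub_apply, Pi.mul_apply, Pi.pow_apply]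
  rw [show ∀ A B : ℝ, 1/3 * (A/B) = A/(3*B) from fun A B => by ring]
  rw [div_eq_div_iff hB hW]
  ring
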